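/- For the recursively defined Boolean functions H_d with H_2(x_1,x_2,x_3,x_4) = x_1 ⊕ x_2 ⊕ (x_1 ⊕ x_3)(x_2 ⊕ x_4) and H_d(x_1,x_2,y,z) = x_1 ⊕ (x_1 ⊕ x_2 ⊕ 1)·H_{d-1}(y) ⊕ (x_1 ⊕ x_2)·H_{d-1}(z) (where y and z are disjoint blocks of variables), the function H_d has 3·2^{d-1} - 2 input variables and polynomial degree exactly d for every d ≥ 2. -/

import Mathlib

/-- Number of variables of the Tarannikov function `H_d`: `3·2^{d-1} - 2`. -/
def hammN (d : ℕ) : ℕ := 3 * 2 ^ (d - 1) - 2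

/-- The recursively defined Boolean functions: `H_2(x₁,x₂,x₃,x₄) = x₁ ⊕ x₂ ⊕ (x₁⊕x₃)(x₂⊕x₄)`
and `H_d(x₁,x₂,y,z) = x₁ ⊕ (x₁⊕x₂⊕1)·H_{d-1}(y) ⊕ (x₁⊕x₂)·H_{d-1}(z)` with `y, z` disjoint
blocks of `3·2^{d-2} - 2` fresh variables each. -/
def tarH : ℕ → (ℕ → Bool) → Bool
  | 0, _ => false
  | 1, x => x 0
  | 2, x => xor (x 0) (xor (x 1) ((xor (x 0) (x 2)) && (xor (x 1) (x 3))))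
  | (d + 3), x =>
      xor (x 0)
        (xor ((!(xor (x 0) (x 1))) && tarH (d + 2) (fun i => x (i + 2)))
             ((xor (x 0) (x 1)) && tarH (d + 2) (fun i => x (2 + hammN (d + 2) + i))))

/-- The real value of a Boolean. -/
def b2r (b : Bool) : ℝ := if b then 1 else 0



-- basic arithmetic
lemma hammN_two : hammN 2 = 4 := rfl
lemma hammN_ge (k : ℕ) : 4 ≤ hammN (k + 2) := by
  induction k with
  | zero => simp [hammN]
  | succ n ih =>
    have h1 : hammN (n+1+2) = 3 * 2^(n+2) - 2 := rfl
    have h2 : hammN (n+2) = 3 * 2^(n+1) - 2 := rfl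
    have h3 : (2:ℕ)^(n+1) ≤ 2^(n+2) := Nat.pow_le_pow_right (by norm_num) (by omega)
    omega

lemma hammN_step (k : ℕ) : hammN (k + 3) = 2 + 2 * hammN (k + 2) := by
  have h1 : hammN (k+3) = 3 * 2^(k+2) - 2 := rfl
  have h2 : hammN (k+2) = 3 * 2^(k+1) - 2 := rfl
  have h3 : (2:ℕ)^(k+2) = 2 * 2^(k+1) := by ring
  have h4 : 2 ≤ (2:ℕ)^(k+1) := by
    calc 2 = 2^1 := rfl
    _ ≤ 2^(k+1) := Nat.pow_le_pow_right (by norm_num) (by omega)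
  omega

lemma tarH_eq (k : ℕ) (x : ℕ → Bool) : tarH (k+3) x =
      xor (x 0)
        (xor ((!(xor (x 0) (x 1))) && tarH (k + 2) (fun i => x (i + 2)))
             ((xor (x 0) (x 1)) && tarH (k + 2) (fun i => x (2 + hammN (k + 2) + i)))) := rfl

-- support lemma
lemma tarH_supp (k : ℕ) : ∀ x y : ℕ → Bool, (∀ i < hammN (k+2), x i = y i) → tarH (k+2) x = tarH (k+2) y := by
  induction k with
  | zero =>
    intro x y h
    have h0 := h 0 (by norm_num [hammN]); have h1 := h 1 (by norm_num [hammN])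
    have h2 := h 2 (by norm_num [hammN]); have h3 := h 3 (by norm_num [hammN])
    show tarH 2 x = tarH 2 y
    simp only [tarH, h0, h1, h2, h3]
  | succ n ih =>
    intro x y h
    have hs : hammN (n+1+2) = 2 + 2 * hammN (n+2) := hammN_step n
    have h4 := hammN_ge n
    rw [show n+1+2 = n+3 from rfl, tarH_eq, tarH_eq]
    have h0 := h 0 (by omega); have h1 := h 1 (by omega)
    have hy : tarH (n+2) (fun i => x (i+2)) = tarH (n+2) (fun i => y (i+2)) :=
      ih _ _ (fun i hi => h (i+2) (by omega))
    have hz : tarH (n+2) (fun i => x (2 + hammN (n+2) + i)) = tarH (n+2) (fun i => y (2 + hammN (n+2) + i)) :=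
      ih _ _ (fun i hi => h (2 + hammN (n+2) + i) (by omega))
    rw [h0, h1, hy, hz]

open Finset in
/-- the evaluation point: coordinates in `S` are set according to `T`, others per `x`. -/
def pt (S T : Finset ℕ) (x : ℕ → Bool) : ℕ → Bool :=
  fun i => if i ∈ S then decide (i ∈ T) else x i

open Finset in
/-- signed sum of `F` over the subcube in directions `S` based at `x`. -/
noncomputable def DR (F : (ℕ → Bool) → ℝ) (S : Finset ℕ) (x : ℕ → Bool) : ℝ :=
  ∑ T ∈ S.powerset, (-1 : ℝ) ^ T.card * F (pt S T x)

open Finset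

lemma sum_pow_neg_one (S : Finset ℕ) :
    ∑ T ∈ S.powerset, (-1 : ℝ) ^ T.card = if S = ∅ then 1 else 0 := by
  have := Finset.prod_add (fun _ : ℕ => (-1 : ℝ)) (fun _ => 1) S
  simp only [neg_add_cancel, prod_const, one_pow, mul_one] at this
  rw [← this]
  rcases eq_or_ne S ∅ with h | h
  · simp [h]
  · rw [if_neg h, zero_pow]
    simpa [card_eq_zero] using h

lemma DR_congr (F G : (ℕ → Bool) → ℝ) (h : ∀ y, F y = G y) (S : Finset ℕ) (x : ℕ → Bool) :
    DR F S x = DR G S x := by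
  unfold DR; exact Finset.sum_congr rfl (fun T _ => by rw [h])

lemma DR_add (F G : (ℕ → Bool) → ℝ) (S : Finset ℕ) (x : ℕ → Bool) :
    DR (fun y => F y + G y) S x = DR F S x + DR G S x := by
  unfold DR; rw [← Finset.sum_add_distrib]
  exact Finset.sum_congr rfl (fun T _ => by ring)

lemma DR_sub (F G : (ℕ → Bool) → ℝ) (S : Finset ℕ) (x : ℕ → Bool) :
    DR (fun y => F y - G y) S x = DR F S x - DR G S x := by
  unfold DR; rw [← Finset.sum_sub_distrib]
  exact Finset.sum_congr rfl (fun T _ => by ring)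

lemma DR_const (c : ℝ) (S : Finset ℕ) (x : ℕ → Bool) :
    DR (fun _ => c) S x = if S = ∅ then c else 0 := by
  unfold DR
  rw [show ∑ T ∈ S.powerset, (-1:ℝ)^T.card * c = (∑ T ∈ S.powerset, (-1:ℝ)^T.card) * c by
    rw [Finset.sum_mul]]
  rw [sum_pow_neg_one]
  split <;> simp

/-- `DR` of a monomial. -/
lemma DR_mono (U S : Finset ℕ) (x : ℕ → Bool) :
    DR (fun y => ∏ i ∈ U, b2r (y i)) S x
      = if S ⊆ U then (-1 : ℝ) ^ S.card * ∏ i ∈ U \ S, b2r (x i) else 0 := by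
  unfold DR
  have key : ∀ T ∈ S.powerset,
      (-1:ℝ)^T.card * ∏ i ∈ U, b2r (pt S T x i)
      = (∏ i ∈ T, (-1:ℝ)) * (∏ i ∈ S \ T, (if i ∈ U then 0 else 1)) * ∏ i ∈ U \ S, b2r (x i) := by
    intro T hT
    rw [Finset.mem_powerset] at hT
    have h1 : ∏ i ∈ U, b2r (pt S T x i)
        = (∏ i ∈ U ∩ S, b2r (pt S T x i)) * ∏ i ∈ U \ S, b2r (pt S T x i) := by
      rw [Finset.prod_inter_mul_prod_diff]
    have h2 : ∀ i ∈ U \ S, b2r (pt S T x i) = b2r (x i) := by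
      intro i hi
      rw [Finset.mem_sdiff] at hi
      simp [pt, hi.2]
    have h3 : (∏ i ∈ U ∩ S, b2r (pt S T x i)) = ∏ i ∈ S \ T, (if i ∈ U then (0:ℝ) else 1) := by
      by_cases hsub : U ∩ S ⊆ T
      · rw [Finset.prod_eq_one, Finset.prod_eq_one]
        · intro i hi
          rw [Finset.mem_sdiff] at hi
          have : i ∉ U := fun hiU => hi.2 (hsub (Finset.mem_inter.2 ⟨hiU, hi.1⟩))
          simp [this]
        · intro i hi
          have : i ∈ T := hsub hi
          rw [Finset.mem_inter] at hi
          simp [pt, hi.2, this, b2r]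
      · obtain ⟨j, hj, hjT⟩ := Finset.not_subset.1 hsub
        rw [Finset.mem_inter] at hj
        have e1 : ∏ i ∈ U ∩ S, b2r (pt S T x i) = 0 :=
          Finset.prod_eq_zero (Finset.mem_inter.2 hj) (by simp [pt, hj.2, hjT, b2r])
        have e2 : (∏ i ∈ S \ T, (if i ∈ U then (0:ℝ) else 1)) = 0 :=
          Finset.prod_eq_zero (Finset.mem_sdiff.2 ⟨hj.2, hjT⟩) (by simp [hj.1])
        rw [e1, e2]
    rw [h1, Finset.prod_congr rfl h2, h3, Finset.prod_const]
    ring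
  rw [Finset.sum_congr rfl key]
  rw [← Finset.sum_mul, ← Finset.prod_add]
  have : (∏ i ∈ S, ((-1:ℝ) + if i ∈ U then 0 else 1))
      = if S ⊆ U then (-1:ℝ)^S.card else 0 := by
    by_cases hsub : S ⊆ U
    · rw [if_pos hsub,
        Finset.prod_congr rfl
          (fun i hi => show (-1:ℝ) + (if i ∈ U then 0 else 1) = -1 by simp [hsub hi]),
        Finset.prod_const]
    · obtain ⟨j, hj, hjU⟩ := Finset.not_subset.1 hsub
      rw [if_neg hsub, Finset.prod_eq_zero hj]
      simp [hjU]
  rw [this]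
  split <;> simp

/-- `DR` of a function with a given multilinear representation. -/
lemma DR_rep (F : (ℕ → Bool) → ℝ) (P : Finset (Finset ℕ)) (c : Finset ℕ → ℝ)
    (hrep : ∀ y, F y = ∑ U ∈ P, c U * ∏ i ∈ U, b2r (y i)) (S : Finset ℕ) (x : ℕ → Bool) :
    DR F S x = ∑ U ∈ P, c U * (if S ⊆ U then (-1:ℝ)^S.card * ∏ i ∈ U \ S, b2r (x i) else 0) := by
  unfold DR
  calc ∑ T ∈ S.powerset, (-1:ℝ)^T.card * F (pt S T x)
      = ∑ T ∈ S.powerset, ∑ U ∈ P, c U * ((-1:ℝ)^T.card * ∏ i ∈ U, b2r (pt S T x i)) := by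
        refine Finset.sum_congr rfl fun T _ => ?_
        rw [hrep, Finset.mul_sum]
        exact Finset.sum_congr rfl fun U _ => by ring
    _ = ∑ U ∈ P, ∑ T ∈ S.powerset, c U * ((-1:ℝ)^T.card * ∏ i ∈ U, b2r (pt S T x i)) :=
        Finset.sum_comm
    _ = ∑ U ∈ P, c U * DR (fun y => ∏ i ∈ U, b2r (y i)) S x := by
        refine Finset.sum_congr rfl fun U _ => ?_
        rw [DR, Finset.mul_sum]
    _ = _ := Finset.sum_congr rfl fun U _ => by rw [DR_mono]

lemma DR_not_depend (F : (ℕ → Bool) → ℝ) (S : Finset ℕ) (x : ℕ → Bool) (j : ℕ)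
    (hj : j ∈ S) (hF : ∀ y b, F (Function.update y j b) = F y) : DR F S x = 0 := by
  unfold DR
  have hS : S = insert j (S.erase j) := (Finset.insert_erase hj).symm
  rw [hS, Finset.sum_powerset_insert (Finset.notMem_erase j S)]
  rw [← Finset.sum_add_distrib]
  rw [Finset.sum_eq_zero]
  intro T hT
  rw [Finset.mem_powerset] at hT
  have hjT : j ∉ T := fun h => Finset.notMem_erase j S (hT h)
  have hcard : (insert j T).card = T.card + 1 := Finset.card_insert_of_notMem hjT
  have hpt : pt (insert j (S.erase j)) (insert j T) x
      = Function.update (pt (insert j (S.erase j)) T x) j true := by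
    funext i
    rcases eq_or_ne i j with rfl | hij
    · simp [pt, Function.update]
    · simp [pt, Function.update, hij, Finset.mem_insert, hij]
  have hval : F (pt (insert j (S.erase j)) (insert j T) x)
      = F (pt (insert j (S.erase j)) T x) := by
    rw [hpt, hF]
  rw [hval, hcard, pow_succ]
  ring

lemma sum_powerset_union (S₁ S₂ : Finset ℕ) (hd : Disjoint S₁ S₂)
    (f : Finset ℕ → ℝ) :
    ∑ T ∈ (S₁ ∪ S₂).powerset, f T = ∑ T₁ ∈ S₁.powerset, ∑ T₂ ∈ S₂.powerset, f (T₁ ∪ T₂) := by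
  induction S₁ using Finset.induction_on generalizing f with
  | empty => simp
  | @insert a s ha ih =>
    have hd' : Disjoint s S₂ := Finset.disjoint_of_subset_left (Finset.subset_insert a s) hd
    have haS₂ : a ∉ S₂ := fun h => Finset.disjoint_left.1 hd (Finset.mem_insert_self a s) h
    have haU : a ∉ s ∪ S₂ := by simp [ha, haS₂]
    rw [Finset.insert_union, Finset.sum_powerset_insert haU,
      Finset.sum_powerset_insert ha, ih hd' f, ih hd' (fun T => f (insert a T)),
      ← Finset.sum_add_distrib]
    rw [Finset.sum_add_distrib]
    congr 1
    exact Finset.sum_congr rfl fun T₁ _ =>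
      Finset.sum_congr rfl fun T₂ _ => by rw [Finset.insert_union]

/-- splitting `DR` of a product of functions with disjoint supports covering `S`. -/
lemma DR_split (p q : ℕ → Prop) [DecidablePred p] [DecidablePred q]
    (hpq : ∀ i, ¬(p i ∧ q i))
    (F G : (ℕ → Bool) → ℝ)
    (hF : ∀ y z, (∀ i, p i → y i = z i) → F y = F z)
    (hG : ∀ y z, (∀ i, q i → y i = z i) → G y = G z)
    (S : Finset ℕ) (x : ℕ → Bool) (hcov : ∀ i ∈ S, p i ∨ q i) :
    DR (fun y => F y * G y) S x = DR F (S.filter p) x * DR G (S.filter q) x := by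
  have hdisj : Disjoint (S.filter p) (S.filter q) := by
    rw [Finset.disjoint_left]
    intro i h1 h2
    rw [Finset.mem_filter] at h1 h2
    exact hpq i ⟨h1.2, h2.2⟩
  have hS : S = S.filter p ∪ S.filter q := by
    ext i
    simp only [Finset.mem_union, Finset.mem_filter]
    constructor
    · intro hi; rcases hcov i hi with h | h
      · exact Or.inl ⟨hi, h⟩
      · exact Or.inr ⟨hi, h⟩
    · rintro (⟨h, _⟩ | ⟨h, _⟩) <;> exact h
  conv_lhs => rw [DR, hS, sum_powerset_union _ _ hdisj]
  rw [DR, DR, Finset.sum_mul_sum]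
  refine Finset.sum_congr rfl fun T₁ hT₁ => Finset.sum_congr rfl fun T₂ hT₂ => ?_
  rw [Finset.mem_powerset] at hT₁ hT₂
  have hdT : Disjoint T₁ T₂ := Finset.disjoint_of_subset_left hT₁
    (Finset.disjoint_of_subset_right hT₂ hdisj)
  have hcard : (T₁ ∪ T₂).card = T₁.card + T₂.card := Finset.card_union_of_disjoint hdT
  have hFval : F (pt (S.filter p ∪ S.filter q) (T₁ ∪ T₂) x) = F (pt (S.filter p) T₁ x) := by
    apply hF
    intro i hpi
    have hiq : ¬ q i := fun h => hpq i ⟨hpi, h⟩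
    have hiT₂ : i ∉ T₂ := fun h => hiq (Finset.mem_filter.1 (hT₂ h)).2
    have hifq : i ∉ S.filter q := fun h => hiq (Finset.mem_filter.1 h).2
    simp only [pt, Finset.mem_union, Finset.mem_filter]
    by_cases hiS : i ∈ S <;> simp [pt, hiS, hpi, hiq, hiT₂, Finset.mem_union]
  have hGval : G (pt (S.filter p ∪ S.filter q) (T₁ ∪ T₂) x) = G (pt (S.filter q) T₂ x) := by
    apply hG
    intro i hqi
    have hip : ¬ p i := fun h => hpq i ⟨h, hqi⟩
    have hiT₁ : i ∉ T₁ := fun h => hip (Finset.mem_filter.1 (hT₁ h)).2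
    by_cases hiS : i ∈ S <;> simp [pt, hiS, hqi, hip, hiT₁, Finset.mem_union]
  rw [hFval, hGval, hcard, pow_add]
  ring

lemma powerset_image_add (S : Finset ℕ) (c : ℕ) :
    (S.image (· + c)).powerset = S.powerset.image (Finset.image (· + c)) := by
  ext T
  simp only [Finset.mem_powerset, Finset.mem_image]
  constructor
  · intro h
    obtain ⟨s', hs', rfl⟩ := Finset.subset_image_iff.1 h
    exact ⟨s', hs', rfl⟩
  · rintro ⟨s', hs', rfl⟩
    exact Finset.image_subset_image hs'

lemma DR_shift (F : (ℕ → Bool) → ℝ) (c : ℕ) (S : Finset ℕ) (x : ℕ → Bool) :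
    DR (fun y => F (fun i => y (i + c))) (S.image (· + c)) x = DR F S (fun i => x (i + c)) := by
  have hinj : Function.Injective (· + c : ℕ → ℕ) := add_left_injective c
  unfold DR
  rw [powerset_image_add, Finset.sum_image (by
    intro T₁ _ T₂ _ h
    exact Finset.image_injective hinj h)]
  refine Finset.sum_congr rfl fun T hT => ?_
  rw [Finset.mem_powerset] at hT
  rw [Finset.card_image_of_injective _ hinj]
  congr 1
  apply congrArg
  funext i
  have h1 : i + c ∈ S.image (· + c) ↔ i ∈ S := by
    simp only [Finset.mem_image]
    constructor
    · rintro ⟨b, hb, he⟩; have : b = i := by omega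
      subst this; exact hb
    · intro h; exact ⟨i, h, rfl⟩
  have h2 : i + c ∈ T.image (· + c) ↔ i ∈ T := by
    simp only [Finset.mem_image]
    constructor
    · rintro ⟨b, hb, he⟩; have : b = i := by omega
      subst this; exact hb
    · intro h; exact ⟨i, h, rfl⟩
  simp only [pt]
  by_cases hiS : i ∈ S
  · rw [if_pos (h1.2 hiS), if_pos hiS]
    by_cases hiT : i ∈ T
    · simp [h2.2 hiT, hiT]
    · simp [hiT, fun h => hiT (h2.1 h)]
  · rw [if_neg (fun h => hiS (h1.1 h)), if_neg hiS]

def DZ (f : (ℕ → Bool) → Bool) (S : Finset ℕ) (x : ℕ → Bool) : ℤ :=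
  ∑ T ∈ S.powerset, (-1 : ℤ) ^ T.card * (if f (pt S T x) then 1 else 0)

lemma DR_eq_DZ (f : (ℕ → Bool) → Bool) (S : Finset ℕ) (x : ℕ → Bool) :
    DR (fun y => b2r (f y)) S x = ((DZ f S x : ℤ) : ℝ) := by
  unfold DR DZ
  push_cast
  refine Finset.sum_congr rfl fun T _ => ?_
  by_cases h : f (pt S T x) <;> simp [h, b2r]

example : DZ (tarH 2) {2,3} (fun _ => false) = 1 := by decide
example : DZ (tarH 2) {0,1,2} (fun _ => false) = 0 := by decide
example : DZ (tarH 2) {0,1,2,3} (fun _ => false) = 0 := by decide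

example : DZ (tarH 2) {0,1,3} (fun _ => false) = 0 := by decide
example : DZ (tarH 2) {0,2,3} (fun _ => false) = 0 := by decide
example : DZ (tarH 2) {1,2,3} (fun _ => false) = 0 := by decide

/-- the key real-valued recursion identity. -/
lemma keyId (k : ℕ) (x : ℕ → Bool) :
    b2r (tarH (k+3) x)
      = b2r (x 0)
        + (1 - b2r (x 0) - b2r (x 1)) * b2r (tarH (k+2) (fun i => x (i+2)))
        + (b2r (x 1) - b2r (x 0)) * b2r (tarH (k+2) (fun i => x (2 + hammN (k+2) + i))) := by
  rw [tarH_eq]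
  cases h0 : x 0 <;> cases h1 : x 1 <;>
    cases hA : tarH (k+2) (fun i => x (i+2)) <;>
      cases hB : tarH (k+2) (fun i => x (2 + hammN (k+2) + i)) <;>
        simp [h0, h1, hA, hB, b2r] <;> norm_num

/-- existence of a multilinear representation for any function supported on `range n`. -/
lemma rep_exists (n : ℕ) : ∀ f : (ℕ → Bool) → Bool,
    (∀ x y : ℕ → Bool, (∀ i < n, x i = y i) → f x = f y) →
    ∃ c : Finset ℕ → ℝ, ∀ x : ℕ → Bool,
      b2r (f x) = ∑ S ∈ (Finset.range n).powerset, c S * ∏ i ∈ S, b2r (x i) := by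
  induction n with
  | zero =>
    intro f hf
    refine ⟨fun _ => b2r (f (fun _ => false)), fun x => ?_⟩
    rw [hf x (fun _ => false) (by omega)]
    simp
  | succ n ih =>
    intro f hf
    set g₀ : (ℕ → Bool) → Bool := fun y => f (Function.update y n false) with hg₀
    set g₁ : (ℕ → Bool) → Bool := fun y => f (Function.update y n true) with hg₁
    have hsupp : ∀ b (x y : ℕ → Bool), (∀ i < n, x i = y i) →
        f (Function.update x n b) = f (Function.update y n b) := by
      intro b x y h
      apply hf
      intro i hi
      rcases eq_or_ne i n with rfl | hne
      · simp [Function.update]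
      · simp only [Function.update, dif_neg hne]
        exact h i (by omega)
    obtain ⟨c₀, hc₀⟩ := ih g₀ (fun x y h => hsupp false x y h)
    obtain ⟨c₁, hc₁⟩ := ih g₁ (fun x y h => hsupp true x y h)
    refine ⟨fun S => if n ∈ S then c₁ (S.erase n) - c₀ (S.erase n) else c₀ S, fun x => ?_⟩
    have hnr : n ∉ Finset.range n := by simp
    rw [Finset.range_add_one, Finset.sum_powerset_insert hnr]
    have e1 : ∑ S ∈ (Finset.range n).powerset,
        (if n ∈ S then c₁ (S.erase n) - c₀ (S.erase n) else c₀ S) * ∏ i ∈ S, b2r (x i)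
        = ∑ S ∈ (Finset.range n).powerset, c₀ S * ∏ i ∈ S, b2r (x i) := by
      refine Finset.sum_congr rfl fun S hS => ?_
      rw [Finset.mem_powerset] at hS
      have : n ∉ S := fun h => hnr (hS h)
      rw [if_neg this]
    have e2 : ∑ S ∈ (Finset.range n).powerset,
        (if n ∈ insert n S then c₁ ((insert n S).erase n) - c₀ ((insert n S).erase n)
          else c₀ (insert n S)) * ∏ i ∈ insert n S, b2r (x i)
        = b2r (x n) * ((∑ S ∈ (Finset.range n).powerset, c₁ S * ∏ i ∈ S, b2r (x i))
            - ∑ S ∈ (Finset.range n).powerset, c₀ S * ∏ i ∈ S, b2r (x i)) := by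
      rw [← Finset.sum_sub_distrib, Finset.mul_sum]
      refine Finset.sum_congr rfl fun S hS => ?_
      rw [Finset.mem_powerset] at hS
      have hnS : n ∉ S := fun h => hnr (hS h)
      rw [if_pos (Finset.mem_insert_self n S), Finset.erase_insert hnS,
        Finset.prod_insert hnS]
      ring
    rw [e1, e2, ← hc₀, ← hc₁]
    cases hxn : x n
    · have : Function.update x n false = x := by
        rw [← hxn]; exact Function.update_eq_self n x
      simp [b2r, hg₀, this]
    · have : Function.update x n true = x := by
        rw [← hxn]; exact Function.update_eq_self n x
      simp [b2r, hg₁, this]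

lemma DR_empty (F : (ℕ → Bool) → ℝ) (x : ℕ → Bool) : DR F ∅ x = F x := by
  unfold DR
  rw [Finset.powerset_empty, Finset.sum_singleton]
  have : pt ∅ ∅ x = x := by funext i; simp [pt]
  rw [this]
  simp

lemma DR_X (j : ℕ) (S : Finset ℕ) (x : ℕ → Bool) :
    DR (fun y => b2r (y j)) S x = if S ⊆ {j} then (-1:ℝ)^S.card * ∏ i ∈ {j} \ S, b2r (x i) else 0 := by
  rw [DR_congr _ (fun y => ∏ i ∈ ({j} : Finset ℕ), b2r (y i)) (fun y => by simp)]
  exact DR_mono {j} S x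

lemma DR_X_singleton (j : ℕ) (x : ℕ → Bool) :
    DR (fun y => b2r (y j)) {j} x = -1 := by
  rw [DR_X, if_pos (by rfl)]
  simp

lemma DR_X_ne (j : ℕ) (S : Finset ℕ) (x : ℕ → Bool) (h : ¬ S ⊆ {j}) :
    DR (fun y => b2r (y j)) S x = 0 := by
  rw [DR_X, if_neg h]

lemma not_subset_singleton_of_mem {S : Finset ℕ} {a j : ℕ} (ha : a ∈ S) (hne : a ≠ j) :
    ¬ S ⊆ {j} := fun h => hne (Finset.mem_singleton.1 (h ha))

lemma finset_subset_pair {s : Finset ℕ} (h : s ⊆ {0,1}) :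
    s = ∅ ∨ s = {0} ∨ s = {1} ∨ s = ({0,1} : Finset ℕ) := by
  have hmem : ∀ i ∈ s, i = 0 ∨ i = 1 := by
    intro i hi
    have := h hi
    simp only [Finset.mem_insert, Finset.mem_singleton] at this
    exact this
  by_cases h0 : 0 ∈ s <;> by_cases h1 : 1 ∈ s
  · right; right; right
    apply Finset.Subset.antisymm h
    intro i hi
    simp only [Finset.mem_insert, Finset.mem_singleton] at hi
    rcases hi with rfl | rfl <;> assumption
  · right; left
    ext i
    simp only [Finset.mem_singleton]
    constructor
    · intro hi; rcases hmem i hi with rfl | rfl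
      · rfl
      · exact absurd hi h1
    · rintro rfl; exact h0
  · right; right; left
    ext i
    simp only [Finset.mem_singleton]
    constructor
    · intro hi; rcases hmem i hi with rfl | rfl
      · exact absurd hi h0
      · rfl
    · rintro rfl; exact h1
  · left
    ext i
    simp only [Finset.notMem_empty, iff_false]
    intro hi
    rcases hmem i hi with rfl | rfl
    · exact h0 hi
    · exact h1 hi

/-- `DR` of `1 - X₀ - X₁`. -/
lemma DR_aff1 (S : Finset ℕ) (x : ℕ → Bool) (hS : S = {0} ∨ S = {1}) :
    DR (fun y => 1 - b2r (y 0) - b2r (y 1)) S x = 1 := by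
  rw [DR_congr _ (fun y => ((fun _ : ℕ → Bool => (1:ℝ)) y - (fun y => b2r (y 0)) y)
      - (fun y : ℕ → Bool => b2r (y 1)) y) (fun y => rfl), DR_sub, DR_sub, DR_const]
  rcases hS with rfl | rfl
  · rw [DR_X_singleton, DR_X_ne 1 _ _ (not_subset_singleton_of_mem (a := 0) (by simp) (by norm_num))]
    norm_num
  · rw [DR_X_singleton, DR_X_ne 0 _ _ (not_subset_singleton_of_mem (a := 1) (by simp) (by norm_num))]
    norm_num

lemma DR_aff1_pair (x : ℕ → Bool) :
    DR (fun y => 1 - b2r (y 0) - b2r (y 1)) {0,1} x = 0 := by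
  rw [DR_congr _ (fun y => ((fun _ : ℕ → Bool => (1:ℝ)) y - (fun y => b2r (y 0)) y)
      - (fun y : ℕ → Bool => b2r (y 1)) y) (fun y => rfl), DR_sub, DR_sub, DR_const]
  rw [DR_X_ne 0 _ _ (not_subset_singleton_of_mem (a := 1) (by simp) (by norm_num)),
    DR_X_ne 1 _ _ (not_subset_singleton_of_mem (a := 0) (by simp) (by norm_num))]
  norm_num

/-- `DR` of `X₁ - X₀`. -/
lemma DR_aff2 (S : Finset ℕ) (x : ℕ → Bool) (hS : S = {0} ∨ S = {1} ∨ S = ({0,1}:Finset ℕ)) :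
    DR (fun y => b2r (y 1) - b2r (y 0)) S x = if S = {0} then 1 else if S = {1} then -1 else 0 := by
  rw [DR_congr _ (fun y => (fun y : ℕ → Bool => b2r (y 1)) y - (fun y : ℕ → Bool => b2r (y 0)) y)
    (fun y => rfl), DR_sub]
  rcases hS with rfl | rfl | rfl
  · rw [DR_X_singleton, DR_X_ne 1 _ _ (not_subset_singleton_of_mem (a := 0) (by simp) (by norm_num)),
      if_pos rfl]
    norm_num
  · rw [DR_X_singleton, DR_X_ne 0 _ _ (not_subset_singleton_of_mem (a := 1) (by simp) (by norm_num)),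
      if_neg (by decide), if_pos rfl]
    norm_num
  · rw [DR_X_ne 0 _ _ (not_subset_singleton_of_mem (a := 1) (by simp) (by norm_num)),
      DR_X_ne 1 _ _ (not_subset_singleton_of_mem (a := 0) (by simp) (by norm_num)),
      if_neg (by decide), if_neg (by decide)]
    norm_num

/-- uniqueness of coefficients of a multilinear representation. -/
lemma rep_coeff (n : ℕ) (f : (ℕ → Bool) → Bool) (c : Finset ℕ → ℝ)
    (hrep : ∀ x : ℕ → Bool, b2r (f x) = ∑ U ∈ (Finset.range n).powerset, c U * ∏ i ∈ U, b2r (x i))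
    (S : Finset ℕ) (hS : S ∈ (Finset.range n).powerset) :
    c S = (-1:ℝ)^S.card * DR (fun y => b2r (f y)) S (fun _ => false) := by
  rw [DR_rep _ _ c hrep S]
  rw [Finset.sum_eq_single S ?h0 ?h1]
  · rw [if_pos (Finset.Subset.refl S)]
    rw [Finset.sdiff_self, Finset.prod_empty, mul_one, ← mul_assoc, mul_comm ((-1:ℝ)^S.card),
      mul_assoc, ← pow_add, ← two_mul, pow_mul]
    norm_num
  case h0 =>
    intro U hU hne
    by_cases hsub : S ⊆ U
    · rw [if_pos hsub]
      have hne' : (U \ S).Nonempty := by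
        rw [Finset.sdiff_nonempty]
        intro hUS
        exact hne (Finset.Subset.antisymm (fun i hi => hUS hi) hsub)
      obtain ⟨j, hj⟩ := hne'
      rw [Finset.prod_eq_zero hj (by simp [b2r])]
      ring
    · rw [if_neg hsub, mul_zero]
  case h1 =>
    intro h
    exact absurd hS h

/-- a degree bound on a representation kills all higher cube-derivatives. -/
lemma deg_DR_zero (n k : ℕ) (f : (ℕ → Bool) → Bool) (c : Finset ℕ → ℝ)
    (hrep : ∀ x : ℕ → Bool, b2r (f x) = ∑ U ∈ (Finset.range n).powerset, c U * ∏ i ∈ U, b2r (x i))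
    (hdeg : ∀ U, k < U.card → c U = 0) :
    ∀ (S : Finset ℕ) (x : ℕ → Bool), k < S.card → DR (fun y => b2r (f y)) S x = 0 := by
  intro S x hcard
  rw [DR_rep _ _ c hrep S x]
  apply Finset.sum_eq_zero
  intro U hU
  by_cases hc : k < U.card
  · rw [hdeg U hc, zero_mul]
  · have : ¬ S ⊆ U := by
      intro hsub
      have := Finset.card_le_card hsub
      omega
    rw [if_neg this, mul_zero]

/-- `tarH 2` has a representation of degree `2`. -/
lemma rep2 : ∃ c : Finset ℕ → ℝ, (∀ S, 2 < S.card → c S = 0) ∧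
    ∀ x : ℕ → Bool, b2r (tarH 2 x) =
      ∑ S ∈ (Finset.range 4).powerset, c S * ∏ i ∈ S, b2r (x i) := by
  obtain ⟨c, hc⟩ := rep_exists 4 (tarH 2) (by
    have := tarH_supp 0
    simpa [hammN] using this)
  have hzero : ∀ S ∈ (Finset.range 4).powerset, 2 < S.card → c S = 0 := by
    intro S hS hcard
    rw [rep_coeff 4 (tarH 2) c hc S hS, DR_eq_DZ]
    have : DZ (tarH 2) S (fun _ => false) = 0 := by
      revert hcard
      revert hS
      revert S
      decide
    rw [this]
    norm_num
  refine ⟨fun S => if 2 < S.card then 0 else c S, fun S hS => by simp [hS], fun x => ?_⟩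
  rw [hc x]
  refine Finset.sum_congr rfl fun S hS => ?_
  by_cases h : 2 < S.card
  · simp only [if_pos h, hzero S hS h]
  · simp only [if_neg h]

lemma filter_block_image (S : Finset ℕ) (c : ℕ) (hc : 0 < c) (p : ℕ → Prop) [DecidablePred p]
    (hp : ∀ i, p i → c ≤ i) :
    S.filter p = ((S.filter p).image (· - c)).image (· + c) := by
  ext j
  simp only [Finset.mem_image]
  constructor
  · intro hj
    have hcj : c ≤ j := hp j (Finset.mem_filter.1 hj).2
    exact ⟨j - c, ⟨j, hj, rfl⟩, by omega⟩
  · rintro ⟨b, ⟨a, ha, rfl⟩, rfl⟩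
    have hca : c ≤ a := hp a (Finset.mem_filter.1 ha).2
    have : a - c + c = a := by omega
    rw [this]
    exact ha

lemma card_block_image (S : Finset ℕ) (c : ℕ) (p : ℕ → Prop) [DecidablePred p]
    (hp : ∀ i, p i → c ≤ i) :
    ((S.filter p).image (· - c)).card = (S.filter p).card := by
  apply Finset.card_image_of_injOn
  intro a ha b hb hab
  have hab' : a - c = b - c := hab
  have := hp a (Finset.mem_filter.1 ha).2
  have := hp b (Finset.mem_filter.1 hb).2
  omega

/-- all cube-derivatives of order `> d` of `tarH d` vanish. -/
lemma Qlem (k : ℕ) : ∀ (S : Finset ℕ) (x : ℕ → Bool), k + 2 < S.card →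
    DR (fun y => b2r (tarH (k+2) y)) S x = 0 := by
  induction k with
  | zero =>
    obtain ⟨c, hdeg, hrep⟩ := rep2
    exact deg_DR_zero 4 2 (tarH 2) c hrep hdeg
  | succ n ih =>
    intro S x hcard
    set h := hammN (n+2) with hh
    have h4 : 4 ≤ h := hammN_ge n
    have e : ∀ y : ℕ → Bool, tarH (n+2) (fun i => y (2 + h + i))
        = tarH (n+2) (fun i => y (i + (2 + h))) := fun y => by
      apply congrArg; funext i; rw [Nat.add_comm]
    have hdec : DR (fun y => b2r (tarH (n+3) y)) S x
        = DR (fun y => b2r (y 0)) S x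
          + DR (fun y => (1 - b2r (y 0) - b2r (y 1)) * b2r (tarH (n+2) (fun i => y (i+2)))) S x
          + DR (fun y => (b2r (y 1) - b2r (y 0)) * b2r (tarH (n+2) (fun i => y (i + (2+h))))) S x := by
      rw [DR_congr _ (fun y => ((fun y : ℕ → Bool => b2r (y 0)) y
          + (fun y => (1 - b2r (y 0) - b2r (y 1)) * b2r (tarH (n+2) (fun i => y (i+2)))) y)
          + (fun y : ℕ → Bool => (b2r (y 1) - b2r (y 0)) * b2r (tarH (n+2) (fun i => y (i + (2+h))))) y)
        (fun y => by rw [keyId n y, ← hh, e y]), DR_add, DR_add]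
    have hT0 : DR (fun y => b2r (y 0)) S x = 0 := by
      apply DR_X_ne
      intro hsub
      have := Finset.card_le_card hsub
      simp at this
      omega
    -- the `y`-block term
    have hTA : DR (fun y => (1 - b2r (y 0) - b2r (y 1))
        * b2r (tarH (n+2) (fun i => y (i+2)))) S x = 0 := by
      by_cases hcov : ∀ i ∈ S, (i < 2) ∨ (2 ≤ i ∧ i < 2 + h)
      · rw [DR_split (fun i => i < 2) (fun i => 2 ≤ i ∧ i < 2 + h) (by omega)
          _ _ (fun y z hag => by rw [hag 0 (by omega), hag 1 (by omega)])
          (fun y z hag => by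
            rw [tarH_supp n (fun i => y (i+2)) (fun i => z (i+2))
              (fun i hi => hag (i+2) (by omega))])
          S x hcov]
        by_cases hbig : n + 2 < (S.filter (fun i => 2 ≤ i ∧ i < 2 + h)).card
        · rw [filter_block_image S 2 (by omega) (fun i => 2 ≤ i ∧ i < 2 + h)
            (fun i hi => hi.1), DR_shift (fun z => b2r (tarH (n+2) z)) 2]
          rw [ih _ _ (by rwa [card_block_image S 2
            (fun i => 2 ≤ i ∧ i < 2 + h) (fun i hi => hi.1)])]
          ring
        · have hsub2 : S.filter (fun i => i < 2) ⊆ {0, 1} := by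
            intro i hi
            have := (Finset.mem_filter.1 hi).2
            simp only [Finset.mem_insert, Finset.mem_singleton]
            omega
          have hcup : S ⊆ S.filter (fun i => i < 2) ∪ S.filter (fun i => 2 ≤ i ∧ i < 2 + h) := by
            intro i hi
            rcases hcov i hi with hc1 | hc2
            · exact Finset.mem_union_left _ (Finset.mem_filter.2 ⟨hi, hc1⟩)
            · exact Finset.mem_union_right _ (Finset.mem_filter.2 ⟨hi, hc2⟩)
          have hcle := (Finset.card_le_card hcup).trans (Finset.card_union_le _ _)
          have h2le : 2 ≤ (S.filter (fun i => i < 2)).card := by omega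
          have : S.filter (fun i => i < 2) = {0, 1} :=
            Finset.eq_of_subset_of_card_le hsub2 (by simpa using h2le)
          rw [this, DR_aff1_pair]
          ring
      · push_neg at hcov
        obtain ⟨j, hjS, hj1, hj2⟩ := hcov
        have hjge : 2 + h ≤ j := by omega
        apply DR_not_depend _ _ _ j hjS
        intro y b
        have h0 : Function.update y j b 0 = y 0 := Function.update_of_ne (by omega) _ _
        have h1 : Function.update y j b 1 = y 1 := Function.update_of_ne (by omega) _ _
        rw [h0, h1, tarH_supp n (fun i => Function.update y j b (i+2)) (fun i => y (i+2))
          (fun i hi => Function.update_of_ne (by omega) _ _)]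
    -- the `z`-block term
    have hTB : DR (fun y => (b2r (y 1) - b2r (y 0))
        * b2r (tarH (n+2) (fun i => y (i + (2+h))))) S x = 0 := by
      by_cases hcov : ∀ i ∈ S, (i < 2) ∨ (2 + h ≤ i ∧ i < 2 + h + h)
      · rw [DR_split (fun i => i < 2) (fun i => 2 + h ≤ i ∧ i < 2 + h + h) (by omega)
          _ _ (fun y z hag => by rw [hag 0 (by omega), hag 1 (by omega)])
          (fun y z hag => by
            rw [tarH_supp n (fun i => y (i+(2+h))) (fun i => z (i+(2+h)))
              (fun i hi => hag (i+(2+h)) (by omega))])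
          S x hcov]
        by_cases hbig : n + 2 < (S.filter (fun i => 2 + h ≤ i ∧ i < 2 + h + h)).card
        · rw [filter_block_image S (2+h) (by omega) (fun i => 2 + h ≤ i ∧ i < 2 + h + h)
            (fun i hi => hi.1), DR_shift (fun z => b2r (tarH (n+2) z)) (2+h)]
          rw [ih _ _ (by rwa [card_block_image S (2+h)
            (fun i => 2 + h ≤ i ∧ i < 2 + h + h) (fun i hi => hi.1)])]
          ring
        · have hsub2 : S.filter (fun i => i < 2) ⊆ {0, 1} := by
            intro i hi
            have := (Finset.mem_filter.1 hi).2
            simp only [Finset.mem_insert, Finset.mem_singleton]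
            omega
          have hcup : S ⊆ S.filter (fun i => i < 2)
              ∪ S.filter (fun i => 2 + h ≤ i ∧ i < 2 + h + h) := by
            intro i hi
            rcases hcov i hi with hc1 | hc2
            · exact Finset.mem_union_left _ (Finset.mem_filter.2 ⟨hi, hc1⟩)
            · exact Finset.mem_union_right _ (Finset.mem_filter.2 ⟨hi, hc2⟩)
          have hcle := (Finset.card_le_card hcup).trans (Finset.card_union_le _ _)
          have h2le : 2 ≤ (S.filter (fun i => i < 2)).card := by omega
          have heq : S.filter (fun i => i < 2) = {0, 1} :=
            Finset.eq_of_subset_of_card_le hsub2 (by simpa using h2le)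
          rw [heq, DR_aff2 _ _ (Or.inr (Or.inr rfl)), if_neg (by decide), if_neg (by decide)]
          ring
      · push_neg at hcov
        obtain ⟨j, hjS, hj1, hj2⟩ := hcov
        apply DR_not_depend _ _ _ j hjS
        intro y b
        have h0 : Function.update y j b 0 = y 0 := Function.update_of_ne (by omega) _ _
        have h1 : Function.update y j b 1 = y 1 := Function.update_of_ne (by omega) _ _
        rw [h0, h1, tarH_supp n (fun i => Function.update y j b (i+(2+h)))
          (fun i => y (i+(2+h)))
          (fun i hi => Function.update_of_ne (by omega) _ _)]
    have hfin : DR (fun y => b2r (tarH (n+3) y)) S x = 0 := by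
      rw [hdec, hT0, hTA, hTB]; ring
    exact hfin

/-- a nonvanishing cube-derivative of order `d` for `tarH d`. -/
lemma Wlem (k : ℕ) : ∃ (S : Finset ℕ) (x : ℕ → Bool),
    S ⊆ Finset.range (hammN (k+2)) ∧ S.card = k + 2 ∧
    DR (fun y => b2r (tarH (k+2) y)) S x ≠ 0 := by
  induction k with
  | zero =>
    refine ⟨{2,3}, fun _ => false, by decide, by decide, ?_⟩
    rw [DR_eq_DZ]
    have : DZ (tarH 2) {2,3} (fun _ => false) = 1 := by decide
    rw [this]
    norm_num
  | succ n ih =>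
    obtain ⟨S, x, hsub, hcard, hne⟩ := ih
    set h := hammN (n+2) with hh
    have h4 : 4 ≤ h := hammN_ge n
    have hmemS : ∀ a ∈ S, a < h := by
      intro a ha
      have := hsub ha
      simpa using this
    have h1img : ∀ j ∈ S.image (· + 2), 2 ≤ j ∧ j < 2 + h := by
      intro j hj
      obtain ⟨a, ha, rfl⟩ := Finset.mem_image.1 hj
      have := hmemS a ha
      omega
    have h1ni : (1 : ℕ) ∉ S.image (· + 2) := fun hmem => by
      have := h1img 1 hmem; omega
    set S' : Finset ℕ := insert 1 (S.image (· + 2)) with hS'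
    set x' : ℕ → Bool := fun j => if j < 2 then false else x (j - 2) with hx'
    have hcard' : S'.card = n + 3 := by
      rw [hS', Finset.card_insert_of_notMem h1ni,
        Finset.card_image_of_injective _ (add_left_injective 2), hcard]
    have hmem1 : (1:ℕ) ∈ S' := Finset.mem_insert_self 1 _
    refine ⟨S', x', ?_, hcard', ?_⟩
    · intro i hi
      rw [hS', Finset.mem_insert] at hi
      have hstep : hammN (n+3) = 2 + 2 * h := hammN_step n
      rw [Finset.mem_range, hstep]
      rcases hi with rfl | hi
      · omega
      · have := h1img i hi; omega
    have e : ∀ y : ℕ → Bool, tarH (n+2) (fun i => y (2 + h + i))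
        = tarH (n+2) (fun i => y (i + (2 + h))) := fun y => by
      apply congrArg; funext i; rw [Nat.add_comm]
    have hdec : DR (fun y => b2r (tarH (n+3) y)) S' x'
        = DR (fun y => b2r (y 0)) S' x'
          + DR (fun y => (1 - b2r (y 0) - b2r (y 1)) * b2r (tarH (n+2) (fun i => y (i+2)))) S' x'
          + DR (fun y => (b2r (y 1) - b2r (y 0)) * b2r (tarH (n+2) (fun i => y (i + (2+h))))) S' x' := by
      rw [DR_congr _ (fun y => ((fun y : ℕ → Bool => b2r (y 0)) y
          + (fun y => (1 - b2r (y 0) - b2r (y 1)) * b2r (tarH (n+2) (fun i => y (i+2)))) y)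
          + (fun y : ℕ → Bool => (b2r (y 1) - b2r (y 0)) * b2r (tarH (n+2) (fun i => y (i + (2+h))))) y)
        (fun y => by rw [keyId n y, ← hh, e y]), DR_add, DR_add]
    have hT0 : DR (fun y => b2r (y 0)) S' x' = 0 :=
      DR_X_ne 0 S' x' (not_subset_singleton_of_mem hmem1 (by norm_num))
    have hTB : DR (fun y => (b2r (y 1) - b2r (y 0))
        * b2r (tarH (n+2) (fun i => y (i + (2+h))))) S' x' = 0 := by
      have hSne : S.Nonempty := Finset.card_pos.1 (by omega)
      obtain ⟨a, ha⟩ := hSne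
      have hjmem : a + 2 ∈ S' := Finset.mem_insert_of_mem (Finset.mem_image_of_mem _ ha)
      have hja : a + 2 < 2 + h := by have := hmemS a ha; omega
      apply DR_not_depend _ _ _ (a+2) hjmem
      intro y b
      have h0 : Function.update y (a+2) b 0 = y 0 := Function.update_of_ne (by omega) _ _
      have h1 : Function.update y (a+2) b 1 = y 1 := Function.update_of_ne (by omega) _ _
      rw [h0, h1, tarH_supp n (fun i => Function.update y (a+2) b (i+(2+h)))
        (fun i => y (i+(2+h))) (fun i hi => Function.update_of_ne (by omega) _ _)]
    have hfp : S'.filter (fun i => i < 2) = {1} := by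
      ext i
      simp only [Finset.mem_filter, Finset.mem_singleton]
      constructor
      · rintro ⟨hi, hlt⟩
        rw [hS', Finset.mem_insert] at hi
        rcases hi with rfl | hi
        · rfl
        · have := h1img i hi; omega
      · rintro rfl
        exact ⟨hmem1, by omega⟩
    have hfq : S'.filter (fun i => 2 ≤ i ∧ i < 2 + h) = S.image (· + 2) := by
      ext i
      simp only [Finset.mem_filter]
      constructor
      · rintro ⟨hi, hge, hlt⟩
        rw [hS', Finset.mem_insert] at hi
        rcases hi with rfl | hi
        · omega
        · exact hi
      · intro hi
        exact ⟨Finset.mem_insert_of_mem hi, h1img i hi⟩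
    have hbase : (fun i => x' (i + 2)) = x := by
      funext i
      rw [hx']
      simp only [Nat.add_sub_cancel]
      rw [if_neg (by omega)]
    have hTA : DR (fun y => (1 - b2r (y 0) - b2r (y 1))
        * b2r (tarH (n+2) (fun i => y (i+2)))) S' x'
        = DR (fun y => b2r (tarH (n+2) y)) S x := by
      rw [DR_split (fun i => i < 2) (fun i => 2 ≤ i ∧ i < 2 + h) (by omega)
        _ _ (fun y z hag => by rw [hag 0 (by omega), hag 1 (by omega)])
        (fun y z hag => by
          rw [tarH_supp n (fun i => y (i+2)) (fun i => z (i+2))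
            (fun i hi => hag (i+2) (by omega))])
        S' x' (by
          intro i hi
          rw [hS', Finset.mem_insert] at hi
          rcases hi with rfl | hi
          · left; omega
          · right; exact h1img i hi)]
      rw [hfp, hfq, DR_aff1 _ _ (Or.inr rfl), one_mul,
        DR_shift (fun z => b2r (tarH (n+2) z)) 2, hbase]
    rw [hdec, hT0, hTA, hTB, zero_add, add_zero]
    exact hne

lemma tarH3_00 (k : ℕ) (x : ℕ → Bool) (h0 : x 0 = false) (h1 : x 1 = false) :
    tarH (k+3) x = tarH (k+2) (fun i => x (i+2)) := by
  rw [tarH_eq]; simp [h0, h1]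

lemma tarH3_01 (k : ℕ) (x : ℕ → Bool) (h0 : x 0 = false) (h1 : x 1 = true) :
    tarH (k+3) x = tarH (k+2) (fun i => x (2 + hammN (k+2) + i)) := by
  rw [tarH_eq]; simp [h0, h1]

lemma tarH3_10 (k : ℕ) (x : ℕ → Bool) (h0 : x 0 = true) (h1 : x 1 = false) :
    tarH (k+3) x = !(tarH (k+2) (fun i => x (2 + hammN (k+2) + i))) := by
  rw [tarH_eq]; simp [h0, h1]

/-- every variable below `hammN d` is relevant for `tarH d`. -/
lemma Rlem (k : ℕ) : ∀ i < hammN (k+2), ∃ x : ℕ → Bool,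
    tarH (k+2) x ≠ tarH (k+2) (Function.update x i (!(x i))) := by
  induction k with
  | zero =>
    intro i hi
    have hi4 : i < 4 := by simpa [hammN] using hi
    interval_cases i
    · exact ⟨fun _ => false, by decide⟩
    · exact ⟨fun _ => false, by decide⟩
    · exact ⟨fun j => j == 3, by decide⟩
    · exact ⟨fun j => j == 2, by decide⟩
  | succ n ih =>
    intro i hi
    set h := hammN (n+2) with hh
    have h4 : 4 ≤ h := hammN_ge n
    have hstep : hammN (n+1+2) = 2 + 2 * h := hammN_step n
    rw [hstep] at hi
    show ∃ x : ℕ → Bool, tarH (n+3) x ≠ tarH (n+3) (Function.update x i (!(x i)))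
    rcases Nat.lt_or_ge i 2 with hi2 | hi2
    · rcases Nat.lt_or_ge i 1 with hi0 | hi1
      · -- i = 0
        have hieq : i = 0 := by omega
        subst hieq
        refine ⟨fun _ => false, ?_⟩
        set x : ℕ → Bool := fun _ => false with hx
        set x' := Function.update x 0 (!(x 0)) with hx2
        have hx'0 : x' 0 = true := by simp [hx2, hx]
        have hx'1 : x' 1 = false := by simp [hx2, hx, Function.update]
        rw [tarH3_00 n x rfl rfl, tarH3_10 n x' hx'0 hx'1]
        have hb : (fun i => x' (2 + hammN (n+2) + i)) = (fun i => x (i+2)) := by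
          funext j
          rw [hx2, Function.update_of_ne (by omega)]
        rw [hb]
        simp
      · -- i = 1
        have hieq : i = 1 := by omega
        subst hieq
        obtain ⟨w, hw⟩ := ih 0 (by omega)
        set w' := Function.update w 0 (!(w 0)) with hw'
        refine ⟨fun j => if j < 2 then false else if j < 2 + h then w (j-2) else w' (j-2-h), ?_⟩
        set x : ℕ → Bool := fun j => if j < 2 then false else if j < 2 + h then w (j-2) else w' (j-2-h) with hx
        have hx1 : x 1 = false := by simp [hx]
        set x' := Function.update x 1 (!(x 1)) with hx2
        have hx'0 : x' 0 = false := by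
          rw [hx2, Function.update_of_ne (by omega)]; simp [hx]
        have hx'1 : x' 1 = true := by simp [hx2, hx1]
        rw [tarH3_00 n x rfl hx1, tarH3_01 n x' hx'0 hx'1]
        have hA : tarH (n+2) (fun i => x (i+2)) = tarH (n+2) w := by
          apply tarH_supp
          intro j hj
          rw [hx]
          simp only []
          rw [if_neg (by omega), if_pos (by omega)]
          congr 1 <;> omega
        have hB : tarH (n+2) (fun i => x' (2 + hammN (n+2) + i)) = tarH (n+2) w' := by
          apply tarH_supp
          intro j hj
          rw [hx2, Function.update_of_ne (by omega), hx]
          simp only []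
          rw [if_neg (by omega), if_neg (by omega)]
          congr 1 <;> omega
        rw [hA, hB]
        exact hw
    · rcases Nat.lt_or_ge i (2 + h) with hiy | hiz
      · -- y-block
        obtain ⟨w, hw⟩ := ih (i - 2) (by omega)
        refine ⟨fun j => if j < 2 then false else if j < 2 + h then w (j-2) else false, ?_⟩
        set x : ℕ → Bool := fun j => if j < 2 then false else if j < 2 + h then w (j-2) else false with hx
        have hxi : x i = w (i - 2) := by
          rw [hx]; simp only []
          rw [if_neg (by omega), if_pos (by omega)]
        set x' := Function.update x i (!(x i)) with hx2
        have hx'0 : x' 0 = false := by rw [hx2, Function.update_of_ne (by omega)]; simp [hx]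
        have hx'1 : x' 1 = false := by rw [hx2, Function.update_of_ne (by omega)]; simp [hx]
        rw [tarH3_00 n x rfl rfl, tarH3_00 n x' hx'0 hx'1]
        have hA : tarH (n+2) (fun j => x (j+2)) = tarH (n+2) w := by
          apply tarH_supp
          intro j hj
          rw [hx]; simp only []
          rw [if_neg (by omega), if_pos (by omega)]
          congr 1 <;> omega
        have hA' : tarH (n+2) (fun j => x' (j+2)) = tarH (n+2) (Function.update w (i-2) (!(w (i-2)))) := by
          apply tarH_supp
          intro j hj
          rw [hx2, hxi]
          rcases eq_or_ne (j + 2) i with hji | hji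
          · rw [hji, Function.update_self]
            have : j = i - 2 := by omega
            rw [this, Function.update_self]
          · rw [Function.update_of_ne hji, Function.update_of_ne (by omega), hx]
            simp only []
            rw [if_neg (by omega), if_pos (by omega)]
            congr 1 <;> omega
        rw [hA, hA']
        exact hw
      · -- z-block
        obtain ⟨w, hw⟩ := ih (i - 2 - h) (by omega)
        refine ⟨fun j => if j = 1 then true else if j < 2 + h then false else w (j-2-h), ?_⟩
        set x : ℕ → Bool := fun j => if j = 1 then true else if j < 2 + h then false else w (j-2-h) with hx
        have hx0 : x 0 = false := by
          rw [hx]; simp only []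
          rw [if_neg (by omega), if_pos (by omega)]
        have hx1 : x 1 = true := by simp [hx]
        have hxi : x i = w (i - 2 - h) := by
          rw [hx]; simp only []
          rw [if_neg (by omega), if_neg (by omega)]
        set x' := Function.update x i (!(x i)) with hx2
        have hx'0 : x' 0 = false := by rw [hx2, Function.update_of_ne (by omega)]; exact hx0
        have hx'1 : x' 1 = true := by rw [hx2, Function.update_of_ne (by omega)]; exact hx1
        rw [tarH3_01 n x hx0 hx1, tarH3_01 n x' hx'0 hx'1]
        have hB : tarH (n+2) (fun j => x (2 + hammN (n+2) + j)) = tarH (n+2) w := by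
          apply tarH_supp
          intro j hj
          rw [hx]; simp only []
          rw [if_neg (by omega), if_neg (by omega)]
          congr 1 <;> omega
        have hB' : tarH (n+2) (fun j => x' (2 + hammN (n+2) + j))
            = tarH (n+2) (Function.update w (i-2-h) (!(w (i-2-h)))) := by
          apply tarH_supp
          intro j hj
          rw [hx2, hxi]
          rcases eq_or_ne (2 + hammN (n+2) + j) i with hji | hji
          · rw [hji, Function.update_self]
            have : j = i - 2 - h := by omega
            rw [this, Function.update_self]
          · rw [Function.update_of_ne hji, Function.update_of_ne (by omega), hx]
            simp only []
            rw [if_neg (by omega), if_neg (by omega)]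
            congr 1 <;> omega
        rw [hB, hB']
        exact hw

/-- For every `d ≥ 2`, the function `H_d` depends exactly on its `3·2^{d-1} - 2` input
variables and has multilinear polynomial degree exactly `d`. -/
theorem stmt_19 (d : ℕ) (hd : 2 ≤ d) :
    (∀ x y : ℕ → Bool, (∀ i < hammN d, x i = y i) → tarH d x = tarH d y) ∧
    (∀ i < hammN d, ∃ x : ℕ → Bool, tarH d x ≠ tarH d (Function.update x i (!(x i)))) ∧
    (∃ c : Finset ℕ → ℝ, (∀ S, d < S.card → c S = 0) ∧
      ∀ x : ℕ → Bool, b2r (tarH d x) =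
        ∑ S ∈ (Finset.range (hammN d)).powerset, c S * ∏ i ∈ S, b2r (x i)) ∧
    ¬(∃ c : Finset ℕ → ℝ, (∀ S, d - 1 < S.card → c S = 0) ∧
      ∀ x : ℕ → Bool, b2r (tarH d x) =
        ∑ S ∈ (Finset.range (hammN d)).powerset, c S * ∏ i ∈ S, b2r (x i)) := by
  obtain ⟨k, rfl⟩ : ∃ k, d = k + 2 := ⟨d - 2, by omega⟩
  refine ⟨tarH_supp k, Rlem k, ?_, ?_⟩
  · -- existence of a degree-(k+2) representation
    obtain ⟨c, hc⟩ := rep_exists (hammN (k+2)) (tarH (k+2)) (tarH_supp k)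
    refine ⟨fun S => if S ∈ (Finset.range (hammN (k+2))).powerset ∧ S.card ≤ k + 2
        then c S else 0, ?_, ?_⟩
    · intro S hS
      have : ¬ (S ∈ (Finset.range (hammN (k+2))).powerset ∧ S.card ≤ k + 2) := by
        rintro ⟨_, hle⟩; omega
      simp only [if_neg this]
    · intro x
      rw [hc x]
      refine Finset.sum_congr rfl fun S hS => ?_
      by_cases hle : S.card ≤ k + 2
      · simp only [if_pos (⟨hS, hle⟩ : _ ∧ _)]
      · have hzero : c S = 0 := by
          rw [rep_coeff (hammN (k+2)) (tarH (k+2)) c hc S hS,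
            Qlem k S (fun _ => false) (by omega)]
          ring
        have : ¬ (S ∈ (Finset.range (hammN (k+2))).powerset ∧ S.card ≤ k + 2) := by
          rintro ⟨_, h2⟩; omega
        simp only [if_neg this, hzero]
  · -- no representation of degree `k+1`
    rintro ⟨c, hdeg, hrep⟩
    obtain ⟨S, x, hsub, hcard, hne⟩ := Wlem k
    exact hne (deg_DR_zero (hammN (k+2)) (k + 2 - 1) (tarH (k+2)) c hrep hdeg S x (by omega))
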